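/- Let M := A/(e₁², e₂², e₁e₂, e₃). Then the ℚ-vector space H_j(A; M) = Tor_j^A(ℚ, M) has dimension 1 for j = 0, dimension 4 for j = 1, dimension 5 for j = 2, dimension 2 for j = 3, and is zero for j ≥ 4. -/

import Mathlib

open CategoryTheory MvPolynomial

noncomputable section

/-- `A = ℚ[e₁, e₂, e₃]`, the polynomial ring in three variables over `ℚ`;
the variable `eᵢ` is `X (i-1) : A` for `i = 1, 2, 3`. -/
abbrev A : Type := MvPolynomial (Fin 3) ℚ

/-- `ℚ` as an `A`-module via the augmentation sending each variable to `0`. -/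
instance : Module A ℚ :=
  Module.compHom ℚ (MvPolynomial.aeval (fun _ : Fin 3 => (0 : ℚ))).toRingHom

/-- `H_j(A; M) = Tor_j^A(ℚ, M)`, as a `ℚ`-vector space (via restriction of scalars along
`ℚ → A`). -/
def TorQ (j : ℕ) (M : ModuleCat A) : ModuleCat ℚ :=
  (ModuleCat.restrictScalars (algebraMap ℚ A)).obj
    (((Tor (ModuleCat A) j).obj (ModuleCat.of A ℚ)).obj M)

/-- The `A`-module `M = A/(e₁², e₂², e₁e₂, e₃)`. -/
def M17 : ModuleCat A :=
  ModuleCat.of A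
    (A ⧸ Ideal.span {(X 0 : A) ^ 2, (X 1 : A) ^ 2, (X 0 : A) * X 1, (X 2 : A)})

/-! ### Auxiliary material -/

/-- Redeclare the canonical module structure of `A` over itself with higher priority,
so that it is preferred over `MvPolynomial.module` (which would use the
`Module A ℚ` instance above). -/
@[reducible] instance : Module A A := Semiring.toModule

namespace Aux17

/-- The augmentation `A → ℚ`. -/
def ε : A →ₐ[ℚ] ℚ := aeval (fun _ : Fin 3 => (0 : ℚ))

lemma smul_rat (a : A) (q : ℚ) : a • q = ε a * q := rfl

/-- Substitution killing the `i`-th variable. -/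
def τ (i : Fin 3) : A →ₐ[ℚ] A := aeval (fun j : Fin 3 => if j = i then 0 else X j)

@[simp] lemma τ_X_self (i : Fin 3) : τ i (X i) = 0 := by simp [τ]

@[simp] lemma τ0_y : τ 0 (X 1) = (X 1 : A) := by simp [τ]
@[simp] lemma τ0_z : τ 0 (X 2) = (X 2 : A) := by simp [τ]
@[simp] lemma τ1_x : τ 1 (X 0) = (X 0 : A) := by simp [τ]
@[simp] lemma τ1_z : τ 1 (X 2) = (X 2 : A) := by simp [τ]
@[simp] lemma τ2_x : τ 2 (X 0) = (X 0 : A) := by simp [τ]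
@[simp] lemma τ2_y : τ 2 (X 1) = (X 1 : A) := by simp [τ]

lemma X_dvd_sub_τ (i : Fin 3) (p : A) : (X i : A) ∣ p - τ i p := by
  rw [← Ideal.mem_span_singleton, ← Ideal.Quotient.eq]
  have : (Ideal.Quotient.mk (Ideal.span {(X i : A)})).comp (τ i).toRingHom =
      Ideal.Quotient.mk (Ideal.span {(X i : A)}) := by
    apply MvPolynomial.ringHom_ext
    · intro r; simp [τ]
    · intro j
      by_cases h : j = i
      · subst h
        simp only [RingHom.comp_apply, AlgHom.toRingHom_eq_coe, RingHom.coe_coe, τ_X_self,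
          map_zero]
        rw [eq_comm, Ideal.Quotient.eq_zero_iff_mem]
        exact Ideal.subset_span rfl
      · simp [τ, h]
  exact (RingHom.congr_fun this p).symm

lemma X_dvd_of_τ_eq_zero {i : Fin 3} {p : A} (h : τ i p = 0) : (X i : A) ∣ p := by
  simpa [h] using X_dvd_sub_τ i p

end Aux17

namespace Aux17

local notation "x" => (X 0 : A)
local notation "y" => (X 1 : A)
local notation "z" => (X 2 : A)

lemma x_ne_zero : x ≠ 0 := MvPolynomial.X_ne_zero _
lemma y_ne_zero : y ≠ 0 := MvPolynomial.X_ne_zero _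
lemma z_ne_zero : z ≠ 0 := MvPolynomial.X_ne_zero _

/-- First syzygies of `(x², y², xy)`: any relation is a combination of
`(y,0,-x)` and `(0,x,-y)`. -/
lemma syz_xy {r1 r2 r3 : A} (h : r1 * x ^ 2 + r2 * y ^ 2 + r3 * (x * y) = 0) :
    ∃ α β : A, r1 = α * y ∧ r2 = β * x ∧ r3 = -(α * x) - β * y := by
  -- x divides r2
  have hx : x ∣ r2 := by
    have h2 : τ 0 r2 * y ^ 2 = 0 := by
      have h1 := congrArg (τ 0) h
      simpa using h1
    rcases mul_eq_zero.mp h2 with h3 | h3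
    · exact X_dvd_of_τ_eq_zero h3
    · exact absurd h3 (pow_ne_zero _ y_ne_zero)
  obtain ⟨β, hβ⟩ := hx
  have h4 : r1 * x + β * y ^ 2 + r3 * y = 0 := by
    apply mul_left_cancel₀ x_ne_zero
    rw [mul_zero]
    linear_combination h - y ^ 2 * hβ
  -- y divides r1
  have hy : y ∣ r1 := by
    have h2 : τ 1 r1 * x = 0 := by
      have h1 := congrArg (τ 1) h4
      simpa using h1
    rcases mul_eq_zero.mp h2 with h3 | h3
    · exact X_dvd_of_τ_eq_zero h3
    · exact absurd h3 x_ne_zero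
  obtain ⟨α, hα⟩ := hy
  refine ⟨α, β, by linear_combination hα, by linear_combination hβ, ?_⟩
  apply mul_left_cancel₀ y_ne_zero
  linear_combination h4 - x * hα

/-- Kernel elements of the augmentation-degree-one matrix: the full first syzygy
statement for `(x², y², xy, z)`. -/
lemma syz_full {p1 p2 p3 p4 : A}
    (h : p1 * x ^ 2 + p2 * y ^ 2 + p3 * (x * y) + p4 * z = 0) :
    ∃ α β q1 q2 q3 : A,
      p1 = α * y + q1 * z ∧ p2 = β * x + q2 * z ∧
      p3 = -(α * x) - β * y + q3 * z ∧
      p4 = -(q1 * x ^ 2) - q2 * y ^ 2 - q3 * (x * y) := by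
  obtain ⟨q1, hq1⟩ := X_dvd_sub_τ 2 p1
  obtain ⟨q2, hq2⟩ := X_dvd_sub_τ 2 p2
  obtain ⟨q3, hq3⟩ := X_dvd_sub_τ 2 p3
  have hr : τ 2 p1 * x ^ 2 + τ 2 p2 * y ^ 2 + τ 2 p3 * (x * y) = 0 := by
    have h1 := congrArg (τ 2) h
    simpa using h1
  obtain ⟨α, β, h1, h2, h3⟩ := syz_xy hr
  refine ⟨α, β, q1, q2, q3, by linear_combination hq1 + h1, by linear_combination hq2 + h2,
    by linear_combination hq3 + h3, ?_⟩
  apply mul_left_cancel₀ z_ne_zero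
  linear_combination h - x ^ 2 * hq1 - y ^ 2 * hq2 - x * y * hq3 - x ^ 2 * h1 - y ^ 2 * h2 -
    x * y * h3

/-- Second syzygies: any relation among the five first syzygies is a combination of
`(z,0,-y,0,x)` and `(0,z,0,-x,y)`. -/
lemma syz2 {a1 a2 b1 b2 b3 : A}
    (e1 : a1 * y + b1 * z = 0) (e2 : a2 * x + b2 * z = 0)
    (e3 : -(a1 * x) - a2 * y + b3 * z = 0) :
    ∃ c1 c2 : A,
      a1 = c1 * z ∧ a2 = c2 * z ∧ b1 = -(c1 * y) ∧ b2 = -(c2 * x) ∧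
      b3 = c1 * x + c2 * y := by
  have hz1 : z ∣ a1 := by
    have h1 : τ 2 a1 * X 1 = 0 := by
      have := congrArg (τ 2) e1
      simp only [map_add, map_mul, τ_X_self, τ2_y, mul_zero, add_zero, map_zero] at this
      exact this
    rcases mul_eq_zero.mp h1 with h3 | h3
    · exact X_dvd_of_τ_eq_zero h3
    · exact absurd h3 y_ne_zero
  have hz2 : z ∣ a2 := by
    have h1 : τ 2 a2 * X 0 = 0 := by
      have := congrArg (τ 2) e2
      simp only [map_add, map_mul, τ_X_self, τ2_x, mul_zero, add_zero, map_zero] at this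
      exact this
    rcases mul_eq_zero.mp h1 with h3 | h3
    · exact X_dvd_of_τ_eq_zero h3
    · exact absurd h3 x_ne_zero
  obtain ⟨c1, hc1⟩ := hz1
  obtain ⟨c2, hc2⟩ := hz2
  refine ⟨c1, c2, by linear_combination hc1, by linear_combination hc2, ?_, ?_, ?_⟩
  · apply mul_left_cancel₀ z_ne_zero
    linear_combination e1 - y * hc1
  · apply mul_left_cancel₀ z_ne_zero
    linear_combination e2 - x * hc2
  · apply mul_left_cancel₀ z_ne_zero
    linear_combination e3 + x * hc1 + y * hc2

/-! ### The resolution -/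

/-- Betti numbers. -/
def bet : ℕ → ℕ
  | 0 => 1
  | 1 => 4
  | 2 => 5
  | 3 => 2
  | _ + 4 => 0

instance : Subsingleton (Fin 0 → A) :=
  ⟨fun a b => funext fun i => i.elim0⟩

/-- The free modules in the resolution. -/
def P (n : ℕ) : ModuleCat A := ModuleCat.of A (Fin (bet n) → A)

def D1 : Matrix (Fin 1) (Fin 4) A := !![x ^ 2, y ^ 2, x * y, z]

def D2 : Matrix (Fin 4) (Fin 5) A :=
  !![y, 0, z, 0, 0;
     0, x, 0, z, 0;
     -x, -y, 0, 0, z;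
     0, 0, -(x ^ 2), -(y ^ 2), -(x * y)]

def D3 : Matrix (Fin 5) (Fin 2) A :=
  !![z, 0;
     0, z;
     -y, 0;
     0, -x;
     x, y]

/-- The differentials. -/
def dd : ∀ n : ℕ, P (n + 1) ⟶ P n
  | 0 => ModuleCat.ofHom D1.mulVecLin
  | 1 => ModuleCat.ofHom D2.mulVecLin
  | 2 => ModuleCat.ofHom D3.mulVecLin
  | _ + 3 => 0

lemma D1_mul_D2 : D1 * D2 = 0 := by
  ext i j
  fin_cases i <;> fin_cases j <;>
    simp [D1, D2, Matrix.mul_apply, Fin.sum_univ_four] <;> ring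

lemma D2_mul_D3 : D2 * D3 = 0 := by
  ext i j
  fin_cases i <;> fin_cases j <;>
    simp [D2, D3, Matrix.mul_apply, Fin.sum_univ_five] <;> ring

lemma dd_sq : ∀ n : ℕ, dd (n + 1) ≫ dd n = 0
  | 0 => by
    have h : (Matrix.mulVecLin D1).comp (Matrix.mulVecLin D2) = 0 := by
      rw [← Matrix.mulVecLin_mul, D1_mul_D2, Matrix.mulVecLin_zero]
    exact ModuleCat.hom_ext (LinearMap.ext fun v => congrFun (congrArg DFunLike.coe h) v)
  | 1 => by
    have h : (Matrix.mulVecLin D2).comp (Matrix.mulVecLin D3) = 0 := by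
      rw [← Matrix.mulVecLin_mul, D2_mul_D3, Matrix.mulVecLin_zero]
    exact ModuleCat.hom_ext (LinearMap.ext fun v => congrFun (congrArg DFunLike.coe h) v)
  | 2 => by
    show (0 : P 4 ⟶ P 3) ≫ _ = 0
    simp
  | _ + 3 => by
    show (0 : P _ ⟶ P _) ≫ _ = 0
    simp

/-- The complex underlying the resolution. -/
def cpx : ChainComplex (ModuleCat A) ℕ := ChainComplex.of P dd dd_sq

/-- The ideal. -/
def I17 : Ideal A := Ideal.span {x ^ 2, y ^ 2, x * y, z}

/-- The augmentation map of the resolution. -/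
def π0lin : (Fin 1 → A) →ₗ[A] (A ⧸ I17) where
  toFun v := I17.mkQ (v 0)
  map_add' v w := by simp
  map_smul' a v := map_smul I17.mkQ a (v 0)

def π0 : cpx.X 0 ⟶ M17 := ModuleCat.ofHom π0lin

lemma gens_eq_range : ({x ^ 2, y ^ 2, x * y, z} : Set A) =
    Set.range (![x ^ 2, y ^ 2, x * y, z]) := by
  ext a
  constructor
  · rintro (rfl | rfl | rfl | rfl)
    exacts [⟨0, rfl⟩, ⟨1, rfl⟩, ⟨2, rfl⟩, ⟨3, rfl⟩]
  · rintro ⟨i, rfl⟩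
    fin_cases i
    · exact Or.inl rfl
    · exact Or.inr (Or.inl rfl)
    · exact Or.inr (Or.inr (Or.inl rfl))
    · exact Or.inr (Or.inr (Or.inr rfl))

lemma mulVec_D1 (v : Fin 4 → A) :
    D1.mulVec v = fun _ => v 0 * x ^ 2 + v 1 * y ^ 2 + v 2 * (x * y) + v 3 * z := by
  funext i
  fin_cases i
  simp [D1, Matrix.mulVec, dotProduct, Fin.sum_univ_four]
  ring

lemma mulVec_D2 (u : Fin 5 → A) :
    D2.mulVec u = ![u 0 * y + u 2 * z, u 1 * x + u 3 * z,
      -(u 0 * x) - u 1 * y + u 4 * z,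
      -(u 2 * x ^ 2) - u 3 * y ^ 2 - u 4 * (x * y)] := by
  funext i
  fin_cases i <;>
    simp [D2, Matrix.mulVec, dotProduct, Fin.sum_univ_five] <;> ring

lemma mulVec_D3 (w : Fin 2 → A) :
    D3.mulVec w = ![w 0 * z, w 1 * z, -(w 0 * y), -(w 1 * x), w 0 * x + w 1 * y] := by
  funext i
  fin_cases i <;>
    simp [D3, Matrix.mulVec, dotProduct, Fin.sum_univ_two] <;> ring

/-- Exactness at homological degree 1. -/
lemma exact1 (v : Fin 4 → A) (hv : D1.mulVec v = 0) :
    ∃ u : Fin 5 → A, D2.mulVec u = v := by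
  have h : v 0 * x ^ 2 + v 1 * y ^ 2 + v 2 * (x * y) + v 3 * z = 0 := by
    have := congrFun hv 0
    rw [mulVec_D1] at this
    simpa using this
  obtain ⟨α, β, q1, q2, q3, h1, h2, h3, h4⟩ := syz_full h
  refine ⟨![α, β, q1, q2, q3], ?_⟩
  rw [mulVec_D2]
  funext i
  fin_cases i
  · simpa using h1.symm
  · simpa using h2.symm
  · simpa using h3.symm
  · simpa using h4.symm

/-- Exactness at homological degree 2. -/
lemma exact2 (u : Fin 5 → A) (hu : D2.mulVec u = 0) :
    ∃ w : Fin 2 → A, D3.mulVec w = u := by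
  rw [mulVec_D2] at hu
  have e1 := congrFun hu 0
  have e2 := congrFun hu 1
  have e3 := congrFun hu 2
  simp only [Matrix.cons_val_zero, Matrix.cons_val_one, Matrix.head_cons, Pi.zero_apply,
    Matrix.cons_val_two, Matrix.tail_cons] at e1 e2 e3
  obtain ⟨c1, c2, h1, h2, h3, h4, h5⟩ := syz2 e1 e2 e3
  refine ⟨![c1, c2], ?_⟩
  rw [mulVec_D3]
  funext i
  fin_cases i
  · simpa using h1.symm
  · simpa using h2.symm
  · simpa using h3.symm
  · simpa using h4.symm
  · simpa using h5.symm

/-- Exactness at homological degree 3: injectivity -/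
lemma exact3 (w : Fin 2 → A) (hw : D3.mulVec w = 0) : w = 0 := by
  rw [mulVec_D3] at hw
  have e1 := congrFun hw 0
  have e2 := congrFun hw 1
  simp only [Matrix.cons_val_zero, Matrix.cons_val_one, Matrix.head_cons,
    Pi.zero_apply] at e1 e2
  funext i
  fin_cases i
  · simpa using (mul_eq_zero.mp e1).resolve_right z_ne_zero
  · simpa using (mul_eq_zero.mp e2).resolve_right z_ne_zero


open CategoryTheory.MonoidalCategory

/-! ### The projective resolution -/

lemma cpx_d (j : ℕ) : cpx.d (j + 1) j = dd j := ChainComplex.of_d _ _ _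

instance cpx_proj (n : ℕ) : Projective (cpx.X n) :=
  ModuleCat.projective_of_free (Pi.basisFun A (Fin (bet n)))

lemma mem_I17 (v : Fin 4 → A) :
    v 0 * x ^ 2 + v 1 * y ^ 2 + v 2 * (x * y) + v 3 * z ∈ I17 := by
  have h0 : (x ^ 2 : A) ∈ I17 := Ideal.subset_span (by left; rfl)
  have h1 : (y ^ 2 : A) ∈ I17 := Ideal.subset_span (by right; left; rfl)
  have h2 : (x * y : A) ∈ I17 := Ideal.subset_span (by right; right; left; rfl)
  have h3 : (z : A) ∈ I17 := Ideal.subset_span (by right; right; right; rfl)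
  exact add_mem (add_mem (add_mem (I17.mul_mem_left _ h0) (I17.mul_mem_left _ h1))
    (I17.mul_mem_left _ h2)) (I17.mul_mem_left _ h3)

lemma d10_π0 : cpx.d 1 0 ≫ π0 = 0 := by
  rw [cpx_d]
  apply ModuleCat.hom_ext
  apply LinearMap.ext
  intro v
  show π0lin (D1.mulVecLin (show Fin 4 → A from v)) = 0
  rw [Matrix.mulVecLin_apply, mulVec_D1]
  exact (Submodule.Quotient.mk_eq_zero _).mpr (mem_I17 (show Fin 4 → A from v))

/-- Exactness at homological degree 0. -/
lemma exact0 (v : Fin 1 → A) (hv : π0lin v = 0) : ∃ u : Fin 4 → A, D1.mulVec u = v := by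
  have hmem : v 0 ∈ I17 := by
    rw [← Submodule.Quotient.mk_eq_zero]
    exact hv
  rw [I17, gens_eq_range] at hmem
  obtain ⟨c, hc⟩ := Ideal.mem_span_range_iff_exists_fun.mp hmem
  refine ⟨c, ?_⟩
  rw [mulVec_D1]
  funext i
  have hi : i = 0 := Subsingleton.elim i 0
  rw [hi, ← hc]
  simp [Fin.sum_univ_four]

/-- Exactness of the complex in positive degrees. -/
lemma cpx_exactAt_succ (n : ℕ) : cpx.ExactAt (n + 1) := by
  rw [HomologicalComplex.exactAt_iff' _ (n + 2) (n + 1) n (by simp) (by simp)]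
  match n with
  | 0 =>
    rw [ShortComplex.moduleCat_exact_iff]
    intro v hv
    have hv' : D1.mulVec v = 0 := by
      have h : (cpx.d 1 0) v = 0 := hv
      rw [cpx_d] at h
      exact h
    obtain ⟨u, hu⟩ := exact1 v hv'
    refine ⟨u, ?_⟩
    show (cpx.d 2 1) u = v
    rw [cpx_d]
    show D2.mulVecLin u = v
    exact hu
  | 1 =>
    rw [ShortComplex.moduleCat_exact_iff]
    intro v hv
    have hv' : D2.mulVec v = 0 := by
      have h : (cpx.d 2 1) v = 0 := hv
      rw [cpx_d] at h
      exact h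
    obtain ⟨u, hu⟩ := exact2 v hv'
    refine ⟨u, ?_⟩
    show (cpx.d 3 2) u = v
    rw [cpx_d]
    show D3.mulVecLin u = v
    exact hu
  | 2 =>
    rw [ShortComplex.moduleCat_exact_iff]
    intro w hw
    have hw' : D3.mulVec w = 0 := by
      have h : (cpx.d 3 2) w = 0 := hw
      rw [cpx_d] at h
      exact h
    refine ⟨0, ?_⟩
    rw [map_zero]
    exact (exact3 w hw').symm
  | m + 3 =>
    haveI : Subsingleton ((cpx.sc' (m + 3 + 2) (m + 3 + 1) (m + 3)).X₂ : Type) :=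
      (inferInstance : Subsingleton (Fin 0 → A))
    exact ShortComplex.exact_of_isZero_X₂ _ (ModuleCat.isZero_of_subsingleton _)

/-- The projective resolution of `M17`. -/
def res : ProjectiveResolution M17 where
  complex := cpx
  projective := inferInstance
  π := (ChainComplex.toSingle₀Equiv cpx M17).symm ⟨π0, d10_π0⟩
  quasiIso := ⟨fun n => by
    cases n with
    | zero =>
      rw [ChainComplex.quasiIsoAt₀_iff, ShortComplex.quasiIso_iff_of_zeros']
      rotate_left
      · exact cpx.shape 0 0 (by simp)
      · rfl
      · rfl
      have hτ : ((HomologicalComplex.shortComplexFunctor' (ModuleCat A) _ 1 0 0).map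
          ((ChainComplex.toSingle₀Equiv cpx M17).symm ⟨π0, d10_π0⟩)).τ₂ = π0 :=
        ChainComplex.toSingle₀Equiv_symm_apply_f_zero _ _
      constructor
      · rw [ShortComplex.moduleCat_exact_iff]
        intro v hv
        have hv' : π0 v = 0 := by rw [← hτ]; exact hv
        obtain ⟨u, hu⟩ := exact0 v hv'
        refine ⟨u, ?_⟩
        show (cpx.d 1 0) u = v
        rw [cpx_d]
        show D1.mulVecLin u = v
        exact hu
      · show Epi ((HomologicalComplex.shortComplexFunctor' (ModuleCat A) _ 1 0 0).map
          ((ChainComplex.toSingle₀Equiv cpx M17).symm ⟨π0, d10_π0⟩)).τ₂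
        rw [hτ]
        refine (ModuleCat.epi_iff_surjective (f := π0)).mpr ?_
        intro m
        obtain ⟨a, ha⟩ := Ideal.Quotient.mk_surjective (I := I17) m
        exact ⟨fun _ => a, ha⟩
    | succ n =>
      rw [quasiIsoAt_iff_exactAt']
      · exact cpx_exactAt_succ n
      · apply ChainComplex.exactAt_succ_single_obj⟩

/-! ### The tensored complex -/

/-- The functor `ℚ ⊗[A] -`. -/
def F : ModuleCat A ⥤ ModuleCat A := (tensoringLeft (ModuleCat A)).obj (ModuleCat.of A ℚ)

instance : F.Additive := by
  show (((tensoringLeft (ModuleCat A)).obj (ModuleCat.of A ℚ))).Additive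
  infer_instance

lemma tmul_eq_zero {k : ℕ} (q : ℚ) (w : Fin k → A) (hw : ∀ i, ε (w i) = 0) :
    (q ⊗ₜ[A] w : TensorProduct A ℚ (Fin k → A)) = 0 := by
  have hw' : w = ∑ i, (Pi.single i (w i) : Fin k → A) := (Finset.univ_sum_single w).symm
  rw [hw', TensorProduct.tmul_sum]
  refine Finset.sum_eq_zero fun i _ => ?_
  have h3 : q ⊗ₜ[A] (Pi.single i (w i) : Fin k → A) =
      w i • (q ⊗ₜ[A] (Pi.single i (1 : A) : Fin k → A)) := by
    have h0 := map_smul ((TensorProduct.mk A ℚ (Fin k → A) q).comp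
      (LinearMap.single A (fun _ => A) i)) (w i) (1 : A)
    simp only [LinearMap.comp_apply, TensorProduct.mk_apply, LinearMap.coe_single,
      smul_eq_mul, mul_one] at h0
    exact h0
  rw [h3]
  show ((w i • q) ⊗ₜ[A] (Pi.single i (1 : A) : Fin k → A) : TensorProduct A ℚ (Fin k → A)) = 0
  rw [smul_rat, hw i, zero_mul, TensorProduct.zero_tmul]

lemma ε_mulVec {k m : ℕ} (D : Matrix (Fin k) (Fin m) A) (hD : ∀ i j, ε (D i j) = 0)
    (v : Fin m → A) (i : Fin k) : ε (D.mulVec v i) = 0 := by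
  show ε (∑ j, D i j * v j) = 0
  rw [map_sum]
  exact Finset.sum_eq_zero fun j _ => by rw [map_mul, hD, zero_mul]

lemma ε_D1 : ∀ i j, ε (D1 i j) = 0 := by
  intro i j; fin_cases i <;> fin_cases j <;> simp [D1, ε]

lemma ε_D2 : ∀ i j, ε (D2 i j) = 0 := by
  intro i j; fin_cases i <;> fin_cases j <;> simp [D2, ε]

lemma ε_D3 : ∀ i j, ε (D3 i j) = 0 := by
  intro i j; fin_cases i <;> fin_cases j <;> simp [D3, ε]

lemma F_map_mulVecLin_eq_zero {k m : ℕ} (D : Matrix (Fin k) (Fin m) A)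
    (hD : ∀ i j, ε (D i j) = 0) :
    F.map (ModuleCat.ofHom D.mulVecLin :
      ModuleCat.of A (Fin m → A) ⟶ ModuleCat.of A (Fin k → A)) = 0 := by
  apply ModuleCat.hom_ext
  apply TensorProduct.ext'
  intro q v
  show (ModuleCat.of A ℚ ◁ (ModuleCat.ofHom D.mulVecLin)) (q ⊗ₜ v) = 0
  rw [ModuleCat.MonoidalCategory.whiskerLeft_apply]
  show (q ⊗ₜ[A] (D.mulVecLin v) : TensorProduct A ℚ (Fin k → A)) = 0
  rw [Matrix.mulVecLin_apply]
  exact tmul_eq_zero q _ (ε_mulVec D hD v)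

lemma F_map_dd (j : ℕ) : F.map (dd j) = 0 := by
  match j with
  | 0 => exact F_map_mulVecLin_eq_zero D1 ε_D1
  | 1 => exact F_map_mulVecLin_eq_zero D2 ε_D2
  | 2 => exact F_map_mulVecLin_eq_zero D3 ε_D3
  | n + 3 => show F.map 0 = 0; exact F.map_zero _ _

/-- The tensored complex. -/
def Q : ChainComplex (ModuleCat A) ℕ :=
  (F.mapHomologicalComplex (ComplexShape.down ℕ)).obj cpx

lemma Q_d_eq_zero (i j : ℕ) : Q.d i j = 0 := by
  by_cases h : j + 1 = i
  · subst h
    show F.map (cpx.d (j + 1) j) = 0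
    rw [cpx_d]
    exact F_map_dd j
  · rw [Q.shape i j h]

/-! ### Computing Tor -/

/-- The homology of the tensored complex in each degree is its term there. -/
def QhomologyIso (j : ℕ) :
    (HomologicalComplex.homologyFunctor (ModuleCat A) (ComplexShape.down ℕ) j).obj Q ≅ Q.X j :=
  (ShortComplex.LeftHomologyData.ofZeros (Q.sc j)
    (Q_d_eq_zero _ _) (Q_d_eq_zero _ _)).homologyIso

/-- `Tor_j(ℚ, M17)` is computed by the tensored resolution. -/
def torIsoQX (j : ℕ) : ((Tor (ModuleCat A) j).obj (ModuleCat.of A ℚ)).obj M17 ≅ Q.X j := by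
  exact (res.isoLeftDerivedObj F j).trans (QhomologyIso j)

/-- The `A`-linear identification of `ℚ ⊗[A] A^k` with `ℚ^k`. -/
def QXequiv (j : ℕ) : (Q.X j : Type) ≃ₗ[A] (Fin (bet j) → ℚ) := by
  exact TensorProduct.piScalarRight A A ℚ (Fin (bet j))

lemma ε_algebraMap (q : ℚ) : ε (algebraMap ℚ A q) = q := by
  simp [ε, MvPolynomial.algebraMap_eq]

/-- Transport an `A`-linear equivalence with `ℚ^k` to a `ℚ`-linear equivalence of the
restricted module. -/
def restEquiv {k : ℕ} (N : ModuleCat A) (e : (N : Type) ≃ₗ[A] (Fin k → ℚ)) :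
    ((ModuleCat.restrictScalars (algebraMap ℚ A)).obj N) ≃ₗ[ℚ] (Fin k → ℚ) where
  toFun := e
  invFun := e.symm
  left_inv := e.left_inv
  right_inv := e.right_inv
  map_add' := e.map_add
  map_smul' q v := by
    show e ((algebraMap ℚ A q) • (show (N : Type) from v)) = q • e v
    rw [map_smul]
    funext i
    show (algebraMap ℚ A q) • (e v i) = q • e v i
    rw [smul_rat, ε_algebraMap]
    rfl

/-- The final computation of `TorQ j M17` as a `ℚ`-vector space. -/
def torEquiv (j : ℕ) : (TorQ j M17 : Type) ≃ₗ[ℚ] (Fin (bet j) → ℚ) :=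
  (((ModuleCat.restrictScalars (algebraMap ℚ A)).mapIso (torIsoQX j)).toLinearEquiv).trans
    (restEquiv _ (QXequiv j))

lemma finrank_torQ (j : ℕ) : Module.finrank ℚ (TorQ j M17) = bet j := by
  rw [(torEquiv j).finrank_eq]
  exact Module.finrank_fin_fun ℚ

instance : Subsingleton (Fin 0 → ℚ) := ⟨fun a b => funext fun i => i.elim0⟩

end Aux17

/-- `Tor_j^A(ℚ, A/(e₁², e₂², e₁e₂, e₃))` has `ℚ`-dimension `1, 4, 5, 2` for `j = 0, 1, 2, 3`
and vanishes for `j ≥ 4`. -/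
theorem statement17 :
    Module.finrank ℚ (TorQ 0 M17) = 1 ∧
    Module.finrank ℚ (TorQ 1 M17) = 4 ∧
    Module.finrank ℚ (TorQ 2 M17) = 5 ∧
    Module.finrank ℚ (TorQ 3 M17) = 2 ∧
    ∀ j : ℕ, 4 ≤ j → Subsingleton (TorQ j M17) := by
  refine ⟨Aux17.finrank_torQ 0, Aux17.finrank_torQ 1, Aux17.finrank_torQ 2,
    Aux17.finrank_torQ 3, ?_⟩
  intro j hj
  obtain ⟨m, rfl⟩ := Nat.exists_eq_add_of_le hj
  rw [Nat.add_comm 4 m]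
  haveI : Subsingleton (Fin (Aux17.bet (m + 4)) → ℚ) :=
    (inferInstance : Subsingleton (Fin 0 → ℚ))
  exact Equiv.subsingleton (Aux17.torEquiv (m + 4)).toEquiv

end
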